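/- Let κ = 0, λ ≠ 0, p ≠ 0, and set ω̄ = -iλp, ω_1(h) = -i(λ/h) sin(ph)(1 + (2/3)sin²(ph/2)), ω_2(h) = -i(λ/h) sin(ph)(1 + (2/3)sin²(ph/2) + (4/9)sin⁴(ph/2)). Then lim_{h→0⁺} (|ω_2(h) - ω̄|² - |ω_1(h) - ω̄|²)/h^{8} = -λ² p^{10} · 7/6480. -/

import Mathlib

open Complex Finset in
lemma sin_bound7 {x : ℝ} (hx : |x| ≤ 1) :
    |Real.sin x - (x - x^3/6 + x^5/120)| ≤ |x|^7 * (1/4410) := by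
  have key : ((Real.sin x - (x - x^3/6 + x^5/120) : ℝ) : ℂ) =
      ((Complex.exp (-x * I) - ∑ m ∈ range 7, (-x * I) ^ m / m.factorial) -
       (Complex.exp (x * I) - ∑ m ∈ range 7, (x * I) ^ m / m.factorial)) * I / 2 := by
    have hs : Complex.sin x = (Complex.exp (-x * I) - Complex.exp (x * I)) * I / 2 := rfl
    push_cast
    rw [hs]
    simp only [sum_range_succ, range_zero, sum_empty, Nat.factorial]
    push_cast
    ring_nf
    simp only [Complex.I_sq, show (Complex.I)^4 = 1 from by norm_num [pow_succ, Complex.I_sq],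
      show (Complex.I)^6 = -1 from by norm_num [pow_succ, Complex.I_sq]]
    ring
  rw [← Real.norm_eq_abs (Real.sin x - _), ← Complex.norm_real, key, norm_div, norm_mul, Complex.norm_I, mul_one,
    Complex.norm_two]
  have b1 : ‖(Complex.exp (x*I) - ∑ m ∈ range 7, (x*I)^m/m.factorial)‖
      ≤ ‖(x*I)‖^7 * ((7:ℕ).succ * ((Nat.factorial 7)*(7:ℕ):ℝ)⁻¹) :=
    Complex.exp_bound (by simpa) (by norm_num)
  have b2 : ‖(Complex.exp (-x*I) - ∑ m ∈ range 7, (-x*I)^m/m.factorial)‖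
      ≤ ‖(-x*I)‖^7 * ((7:ℕ).succ * ((Nat.factorial 7)*(7:ℕ):ℝ)⁻¹) :=
    Complex.exp_bound (by simpa) (by norm_num)
  have habs : ‖((x:ℂ)*I)‖ = |x| := by simp
  have habs2 : ‖(((-x:ℝ):ℂ)*I)‖ = |x| := by simp
  rw [habs] at b1
  rw [show ((-x:ℂ)) = ((-x:ℝ):ℂ) by push_cast; ring] at b2
  rw [habs2] at b2
  have tri : ‖((Complex.exp (-x*I) - ∑ m ∈ range 7, (-x*I)^m/m.factorial) -
      (Complex.exp (x*I) - ∑ m ∈ range 7, (x*I)^m/m.factorial))‖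
      ≤ ‖(Complex.exp (-x*I) - ∑ m ∈ range 7, (-x*I)^m/m.factorial)‖ +
        ‖(Complex.exp (x*I) - ∑ m ∈ range 7, (x*I)^m/m.factorial)‖ := by
    exact norm_sub_le _ _
  rw [show ((-x:ℂ)) = ((-x:ℝ):ℂ) by push_cast; ring] at tri
  rw [div_le_iff₀ (by norm_num : (0:ℝ) < 2)]
  push_cast at tri
  norm_num [Nat.factorial] at b1 b2 tri ⊢
  nlinarith [tri, b1, b2]

open Filter Real Set in
lemma keyK (a : ℝ) :
    Tendsto (fun h : ℝ => (Real.sin (a*h) - a*h + (a*h)^3/6)/h^5)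
      (nhdsWithin 0 (Set.Ioi 0)) (nhds (a^5/120)) := by
  have hδ : (0:ℝ) < 1/(|a|+1) := by positivity
  have hev : ∀ᶠ h in nhdsWithin (0:ℝ) (Set.Ioi 0),
      ‖(Real.sin (a*h) - a*h + (a*h)^3/6)/h^5 - a^5/120‖ ≤ |a|^7/4410 * h^2 := by
    filter_upwards [Ioo_mem_nhdsGT_of_mem (show (0:ℝ) ∈ Ico 0 (1/(|a|+1)) from ⟨le_refl _, hδ⟩)]
      with h hh
    obtain ⟨h0, h1⟩ := hh
    have hax : |a*h| ≤ 1 := by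
      rw [abs_mul, abs_of_pos h0]
      rw [lt_div_iff₀ (by positivity)] at h1
      nlinarith [abs_nonneg a]
    have hb := sin_bound7 hax
    have hne : h ≠ 0 := ne_of_gt h0
    have heq : (Real.sin (a*h) - a*h + (a*h)^3/6)/h^5 - a^5/120
        = (Real.sin (a*h) - (a*h - (a*h)^3/6 + (a*h)^5/120))/h^5 := by
      field_simp
      ring
    rw [heq, Real.norm_eq_abs, abs_div, abs_of_pos (by positivity : (0:ℝ) < h^5)]
    rw [div_le_iff₀ (by positivity : (0:ℝ) < h^5)]
    calc |Real.sin (a*h) - (a*h - (a*h)^3/6 + (a*h)^5/120)| ≤ |a*h|^7 * (1/4410) := hb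
      _ = |a|^7/4410 * h^2 * h^5 := by
          rw [abs_mul, abs_of_pos h0]; ring
  have hz : Tendsto (fun h : ℝ => |a|^7/4410 * h^2) (nhdsWithin 0 (Set.Ioi 0)) (nhds 0) := by
    have : Tendsto (fun h : ℝ => |a|^7/4410 * h^2) (nhds 0) (nhds (|a|^7/4410 * 0^2)) :=
      (continuous_const.mul (continuous_pow 2)).tendsto 0
    simpa using this.mono_left nhdsWithin_le_nhds
  have := squeeze_zero_norm' hev hz
  have h2 := this.add (tendsto_const_nhds (x := a^5/120) (f := nhdsWithin (0:ℝ) (Set.Ioi 0)))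
  simpa using h2

open Filter Real Set in
lemma sinDiv (a : ℝ) :
    Tendsto (fun h : ℝ => Real.sin (a*h)/h) (nhdsWithin 0 (Set.Ioi 0)) (nhds a) := by
  have h1 : Tendsto (fun h : ℝ => ((Real.sin (a*h) - a*h + (a*h)^3/6)/h^5) * h^4
      + (a - a^3*h^2/6)) (nhdsWithin 0 (Set.Ioi 0)) (nhds (a^5/120 * 0 + (a - a^3*0/6))) := by
    refine Tendsto.add (Tendsto.mul (keyK a) ?_) ?_
    · simpa using ((continuous_pow 4).tendsto (0:ℝ)).mono_left nhdsWithin_le_nhds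
    · exact (((by fun_prop : Continuous fun h:ℝ => a - a^3*h^2/6).tendsto' 0 _
        (by norm_num))).mono_left nhdsWithin_le_nhds
  have h1' : Tendsto (fun h : ℝ => ((Real.sin (a*h) - a*h + (a*h)^3/6)/h^5) * h^4
      + (a - a^3*h^2/6)) (nhdsWithin 0 (Set.Ioi 0)) (nhds a) := by simpa using h1
  refine h1'.congr' ?_
  filter_upwards [self_mem_nhdsWithin] with h hh
  have hne : h ≠ 0 := ne_of_gt hh
  field_simp
  ring

lemma absq (r t : ℝ) :
    ‖(-Complex.I * (r:ℂ) - (-Complex.I * (t:ℂ)))‖^2 = (r - t)^2 := by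
  rw [show -Complex.I * (r:ℂ) - (-Complex.I * (t:ℂ)) = -Complex.I * ((r - t : ℝ):ℂ) by
    push_cast; ring]
  rw [norm_mul, Complex.norm_real]
  simp [Complex.norm_I, sq_abs]

open Filter Real Set in
theorem stmt_16 (lam p : ℝ) (hlam : lam ≠ 0) (hp : p ≠ 0) :
    Filter.Tendsto
      (fun h : ℝ =>
        (‖(-Complex.I * ((lam / h * Real.sin (p*h)
              * (1 + (2/3) * Real.sin (p*h/2)^2 + (4/9) * Real.sin (p*h/2)^4) : ℝ) : ℂ))
            - (-Complex.I * ((lam * p : ℝ) : ℂ))‖ ^ 2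
          - ‖(-Complex.I * ((lam / h * Real.sin (p*h)
              * (1 + (2/3) * Real.sin (p*h/2)^2) : ℝ) : ℂ))
            - (-Complex.I * ((lam * p : ℝ) : ℂ))‖ ^ 2)
          / h ^ 8)
      (nhdsWithin 0 (Set.Ioi 0))
      (nhds (-(lam^2 * p^10 * 7 / 6480))) := by
  have hF1 : Tendsto (fun h:ℝ => 4*lam/9 * (Real.sin (p*h)/h) * (Real.sin ((p/2)*h)/h)^4)
      (nhdsWithin 0 (Set.Ioi 0)) (nhds (4*lam/9 * p * (p/2)^4)) :=
    (tendsto_const_nhds.mul (sinDiv p)).mul ((sinDiv (p/2)).pow 4)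
  have hF3 := ((((keyK p).const_mul (4:ℝ)).sub
      ((keyK (2*p)).const_mul (1/2:ℝ))).const_mul (lam/3))
  have hG := hF1.mul (hF1.add (hF3.const_mul (2:ℝ)))
  have hval : (4*lam/9 * p * (p/2)^4) * ((4*lam/9 * p * (p/2)^4)
      + 2 * (lam/3 * (4 * (p^5/120) - 1/2 * ((2*p)^5/120))))
      = -(lam^2 * p^10 * 7 / 6480) := by ring
  rw [hval] at hG
  refine hG.congr' ?_
  filter_upwards [self_mem_nhdsWithin] with h hh
  have hne : h ≠ 0 := ne_of_gt hh
  rw [absq, absq]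
  rw [show (2*p)*h = 2*(p*h) from by ring]
  rw [Real.sin_two_mul (p*h)]
  rw [show p*h/2 = (p/2)*h from by ring]
  rw [show p*h = 2*((p/2)*h) from by ring]
  rw [Real.sin_two_mul ((p/2)*h), Real.cos_two_mul ((p/2)*h), Real.cos_sq' ((p/2)*h)]
  field_simp
  ring
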